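/- Let (X,ν) be a probability space, let {F_n} be a pre-convergent sequence of operators in the class B+, and let A ∈ B+. Then the sequences {A F_n}_n and {F_n A}_n are pre-convergent. -/

import Mathlib

open MeasureTheory Filter ENNReal

namespace Paper

variable {X : Type*} [MeasurableSpace X] (ν : MeasureTheory.Measure X)

/-- The constant function `1` as an element of `L¹(X,ν)`. -/
noncomputable def oneL [IsFiniteMeasure ν] : Lp ℝ 1 ν :=
  (memLp_const (1 : ℝ)).toLp (fun _ => (1 : ℝ))

/-- The class `B⁺` of operators on `L¹(X,ν)`: `A` maps the constant function `1`
to `lam • 1`, is positivity-preserving, maps each `L^p` into itself and satisfies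
`‖A f‖_p ≤ lam * ‖f‖_p` for all `p ∈ [1,∞]`. -/
def InBPlus [IsFiniteMeasure ν] (A : Lp ℝ 1 ν →ₗ[ℝ] Lp ℝ 1 ν) (lam : ℝ) : Prop :=
  A (oneL ν) = lam • oneL ν ∧
  (∀ f : Lp ℝ 1 ν, 0 ≤ f → 0 ≤ A f) ∧
  (∀ (p : ℝ≥0∞), 1 ≤ p → ∀ f : Lp ℝ 1 ν, MemLp (⇑f) p ν →
    MemLp (⇑(A f)) p ν ∧
    eLpNorm (⇑(A f)) p ν ≤ ENNReal.ofReal lam * eLpNorm (⇑f) p ν)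

/-- Cesàro averages `(1/N) ∑_{n<N} T n` of a sequence of operators. -/
noncomputable def cesaro (T : ℕ → (Lp ℝ 1 ν →ₗ[ℝ] Lp ℝ 1 ν)) (N : ℕ) :
    Lp ℝ 1 ν →ₗ[ℝ] Lp ℝ 1 ν :=
  (N : ℝ)⁻¹ • ∑ n ∈ Finset.range N, T n

/-- A sequence of nonnegative reals is regular if, along each arithmetic progression
modulo some `q ≥ 1`, it is either eventually zero or asymptotic to `a k^b c^k`
with `a > 0`, `b ∈ ℕ`, `c ≥ 1`. -/
def IsRegular (x : ℕ → ℝ) : Prop :=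
  ∃ q : ℕ, 0 < q ∧ ∀ r : ℕ, r < q →
    (∀ᶠ k in atTop, x (q * k + r) = 0) ∨
    (∃ a : ℝ, 0 < a ∧ ∃ b : ℕ, ∃ c : ℝ, 1 ≤ c ∧
      Tendsto (fun k : ℕ => x (q * k + r) / (a * (k : ℝ) ^ b * c ^ k)) atTop (nhds 1))

/-- A sequence `T n` of operators of class `B⁺` with `λ(T n) = lam n` is pre-convergent if
`lam` is regular, and the Cesàro averages of the normalized operators `P(T n) = T n / lam n`
applied to `φ` converge in `L^p` for `φ ∈ L^p` (`1 ≤ p < ∞`) and ν-a.e. for `φ ∈ L^∞`.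
(For `T n ≠ 0` one has `lam n ≠ 0` and `(lam n)⁻¹ • T n = P(T n)`; for `T n = 0`,
`lam n = 0` and `(lam n)⁻¹ • T n = 0 = P(0)`.) -/
def PreConvergent [IsFiniteMeasure ν] (T : ℕ → (Lp ℝ 1 ν →ₗ[ℝ] Lp ℝ 1 ν)) (lam : ℕ → ℝ) : Prop :=
  IsRegular lam ∧
  (∀ (p : ℝ≥0∞), 1 ≤ p → p ≠ ∞ → ∀ φ : Lp ℝ 1 ν, MemLp (⇑φ) p ν →
    ∃ g : X → ℝ, MemLp g p ν ∧
      Tendsto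
        (fun N => eLpNorm (fun x => (cesaro ν (fun n => (lam n)⁻¹ • T n) N φ) x - g x) p ν)
        atTop (nhds 0)) ∧
  (∀ φ : Lp ℝ 1 ν, MemLp (⇑φ) ∞ ν →
    ∀ᵐ x ∂ν, ∃ L : ℝ,
      Tendsto (fun N => (cesaro ν (fun n => (lam n)⁻¹ • T n) N φ) x) atTop (nhds L))

end Paper



section Aux
open Paper MeasureTheory Filter ENNReal

variable {X : Type*} [MeasurableSpace X] {ν : MeasureTheory.Measure X} [IsProbabilityMeasure ν]

lemma Paper.oneL_coe : ⇑(oneL ν) =ᵐ[ν] fun _ => (1:ℝ) :=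
  MemLp.coeFn_toLp _

lemma coeFn_finset_sum {ι : Type*} (s : Finset ι) (f : ι → Lp ℝ 1 ν) :
    ⇑(∑ i ∈ s, f i) =ᵐ[ν] fun x => ∑ i ∈ s, f i x := by
  classical
  induction s using Finset.induction_on with
  | empty => simp only [Finset.sum_empty]; exact Lp.coeFn_zero ℝ 1 ν
  | insert _ _ hnot ih =>
    rename_i a s
    rw [Finset.sum_insert hnot]
    filter_upwards [Lp.coeFn_add (f a) (∑ i ∈ s, f i), ih] with x h1 h2
    rw [h1, Pi.add_apply, h2]
    simp [Finset.sum_insert hnot]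

lemma Paper.InBPlus.lam_nonneg {A : Lp ℝ 1 ν →ₗ[ℝ] Lp ℝ 1 ν} {lam : ℝ}
    (hA : InBPlus ν A lam) : 0 ≤ lam := by
  have h1 : (0 : Lp ℝ 1 ν) ≤ oneL ν := by
    rw [← Lp.coeFn_nonneg]
    filter_upwards [oneL_coe] with x hx
    simp only [Pi.zero_apply, hx]; norm_num
  have h2 : (0 : Lp ℝ 1 ν) ≤ lam • oneL ν := hA.1 ▸ hA.2.1 _ h1
  rw [← Lp.coeFn_nonneg] at h2
  have h3 : ∀ᵐ x ∂ν, 0 ≤ lam := by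
    filter_upwards [h2, Lp.coeFn_smul lam (oneL ν), oneL_coe] with x hx hs h1x
    rw [hs] at hx
    simpa [h1x] using hx
  exact h3.exists.choose_spec

lemma Paper.InBPlus.apply_eq_zero {A : Lp ℝ 1 ν →ₗ[ℝ] Lp ℝ 1 ν}
    (hA : InBPlus ν A 0) (f : Lp ℝ 1 ν) : A f = 0 := by
  have h := (hA.2.2 1 le_rfl f (Lp.memLp f)).2
  rw [ENNReal.ofReal_zero, zero_mul, nonpos_iff_eq_zero] at h
  rw [Lp.eq_zero_iff_ae_eq_zero]
  exact (eLpNorm_eq_zero_iff (Lp.aestronglyMeasurable _) one_ne_zero).1 h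

lemma Paper.InBPlus.comp {A B : Lp ℝ 1 ν →ₗ[ℝ] Lp ℝ 1 ν} {a b : ℝ}
    (hA : InBPlus ν A a) (hB : InBPlus ν B b) : InBPlus ν (A ∘ₗ B) (a * b) := by
  refine ⟨?_, fun f hf => hA.2.1 _ (hB.2.1 f hf), fun p hp f hf => ?_⟩
  · rw [LinearMap.comp_apply, hB.1, _root_.map_smul, hA.1, smul_smul, mul_comm]
  · obtain ⟨hB1, hB2⟩ := hB.2.2 p hp f hf
    obtain ⟨hA1, hA2⟩ := hA.2.2 p hp (B f) hB1
    refine ⟨hA1, hA2.trans ?_⟩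
    calc ENNReal.ofReal a * eLpNorm (⇑(B f)) p ν
        ≤ ENNReal.ofReal a * (ENNReal.ofReal b * eLpNorm (⇑f) p ν) :=
          mul_le_mul_right hB2 _
      _ = ENNReal.ofReal (a * b) * eLpNorm (⇑f) p ν := by
          rw [ENNReal.ofReal_mul hA.lam_nonneg, mul_assoc]

end Aux

section Aux2
open Paper MeasureTheory Filter ENNReal
variable {X : Type*} [MeasurableSpace X] {ν : MeasureTheory.Measure X} [IsProbabilityMeasure ν]

lemma Paper.isRegular_zero : IsRegular (fun _ : ℕ => (0:ℝ)) :=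
  ⟨1, one_pos, fun _ _ => Or.inl (Eventually.of_forall fun _ => rfl)⟩

lemma Paper.IsRegular.const_mul {x : ℕ → ℝ} (h : IsRegular x) {c : ℝ} (hc : 0 < c) :
    IsRegular (fun n => c * x n) := by
  obtain ⟨q, hq, hreg⟩ := h
  refine ⟨q, hq, fun r hr => ?_⟩
  rcases hreg r hr with h0 | ⟨a, ha, b, d, hd, ht⟩
  · exact Or.inl (h0.mono fun k hk => by simp [hk])
  · refine Or.inr ⟨c * a, mul_pos hc ha, b, d, hd, ?_⟩
    have he : (fun k : ℕ => (c * x (q*k+r)) / (c * a * (k:ℝ)^b * d^k)) =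
        fun k : ℕ => x (q*k+r) / (a * (k:ℝ)^b * d^k) := by
      funext k
      rw [show c*a*(k:ℝ)^b*d^k = c*(a*(k:ℝ)^b*d^k) by ring,
        mul_div_mul_left _ _ hc.ne']
    exact he ▸ ht

lemma cesaro_comp_left (A : Lp ℝ 1 ν →ₗ[ℝ] Lp ℝ 1 ν) (T : ℕ → (Lp ℝ 1 ν →ₗ[ℝ] Lp ℝ 1 ν))
    (lam : ℕ → ℝ) (a : ℝ) (N : ℕ) (φ : Lp ℝ 1 ν) :
    cesaro ν (fun n => (a * lam n)⁻¹ • (A ∘ₗ T n)) N φ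
      = a⁻¹ • A (cesaro ν (fun n => (lam n)⁻¹ • T n) N φ) := by
  simp only [cesaro, LinearMap.smul_apply, LinearMap.sum_apply, LinearMap.comp_apply,
    _root_.map_smul, map_sum, Finset.smul_sum, smul_smul, mul_inv]
  refine Finset.sum_congr rfl fun n _ => ?_
  congr 1
  ring

lemma cesaro_comp_right (A : Lp ℝ 1 ν →ₗ[ℝ] Lp ℝ 1 ν) (T : ℕ → (Lp ℝ 1 ν →ₗ[ℝ] Lp ℝ 1 ν))
    (lam : ℕ → ℝ) (a : ℝ) (N : ℕ) (φ : Lp ℝ 1 ν) :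
    cesaro ν (fun n => (lam n * a)⁻¹ • (T n ∘ₗ A)) N φ
      = cesaro ν (fun n => (lam n)⁻¹ • T n) N (a⁻¹ • A φ) := by
  simp only [cesaro, LinearMap.smul_apply, LinearMap.sum_apply, LinearMap.comp_apply,
    _root_.map_smul, map_sum, Finset.smul_sum, smul_smul, mul_inv]
  refine Finset.sum_congr rfl fun n _ => ?_
  congr 1
  ring


lemma Paper.InBPlus.norm_one_bound {A : Lp ℝ 1 ν →ₗ[ℝ] Lp ℝ 1 ν} {lam : ℝ}
    (hA : InBPlus ν A lam) (p : ℝ≥0∞) (hp : 1 ≤ p) (f : Lp ℝ 1 ν) (hf : MemLp (⇑f) p ν) :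
    MemLp (⇑(lam⁻¹ • A f)) p ν ∧ eLpNorm (⇑(lam⁻¹ • A f)) p ν ≤ eLpNorm (⇑f) p ν := by
  have hsm : eLpNorm (⇑(lam⁻¹ • A f)) p ν = ‖lam⁻¹‖₊ • eLpNorm (⇑(A f)) p ν := by
    rw [eLpNorm_congr_ae (Lp.coeFn_smul lam⁻¹ (A f)), eLpNorm_const_smul]
    rfl
  rcases eq_or_lt_of_le hA.lam_nonneg with h0 | hpos
  · have hz : A f = 0 := Paper.InBPlus.apply_eq_zero (h0 ▸ hA) f
    rw [hz, smul_zero]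
    constructor
    · exact (memLp_const (0:ℝ)).ae_eq (Lp.coeFn_zero ℝ 1 ν).symm
    · rw [eLpNorm_congr_ae (Lp.coeFn_zero ℝ 1 ν), eLpNorm_zero]
      exact zero_le
  · obtain ⟨h1, h2⟩ := hA.2.2 p hp f hf
    constructor
    · exact (h1.const_smul lam⁻¹).ae_eq (Lp.coeFn_smul lam⁻¹ (A f)).symm
    · rw [hsm]
      have : (‖lam⁻¹‖₊ : ℝ≥0∞) = ENNReal.ofReal lam⁻¹ :=
        (Real.enorm_eq_ofReal (inv_nonneg.2 hA.lam_nonneg))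
      rw [ENNReal.smul_def, this]
      calc ENNReal.ofReal lam⁻¹ * eLpNorm (⇑(A f)) p ν
          ≤ ENNReal.ofReal lam⁻¹ * (ENNReal.ofReal lam * eLpNorm (⇑f) p ν) :=
            mul_le_mul_right h2 _
        _ = (ENNReal.ofReal lam⁻¹ * ENNReal.ofReal lam) * eLpNorm (⇑f) p ν := by ring
        _ = eLpNorm (⇑f) p ν := by
            rw [← ENNReal.ofReal_mul (inv_nonneg.2 hA.lam_nonneg), inv_mul_cancel₀ hpos.ne',
              ENNReal.ofReal_one, one_mul]

lemma memℒp_cesaro_coe {p : ℝ≥0∞} (T : ℕ → (Lp ℝ 1 ν →ₗ[ℝ] Lp ℝ 1 ν))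
    (hT : ∀ n (f : Lp ℝ 1 ν), MemLp (⇑f) p ν → MemLp (⇑(T n f)) p ν)
    (N : ℕ) (φ : Lp ℝ 1 ν) (hφ : MemLp (⇑φ) p ν) :
    MemLp (⇑(cesaro ν T N φ)) p ν := by
  have hsum : MemLp (⇑(∑ n ∈ Finset.range N, T n φ)) p ν := by
    refine (memLp_finset_sum' (Finset.range N)
      (f := fun n => ⇑(T n φ)) (fun n _ => hT n φ hφ)).ae_eq ?_
    filter_upwards [coeFn_finset_sum (Finset.range N) (fun n => T n φ)] with x hx
    rw [Finset.sum_apply, hx]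
  have : cesaro ν T N φ = (N:ℝ)⁻¹ • (∑ n ∈ Finset.range N, T n φ) := by
    simp [cesaro, LinearMap.sum_apply]
  rw [this]
  exact (hsum.const_smul ((N:ℝ)⁻¹)).ae_eq (Lp.coeFn_smul _ _).symm

lemma eLpNorm_cesaro_le {q : ℝ≥0∞} (hq : 1 ≤ q) {K : ℝ≥0∞}
    (T : ℕ → (Lp ℝ 1 ν →ₗ[ℝ] Lp ℝ 1 ν)) (φ : Lp ℝ 1 ν)
    (hT : ∀ n, eLpNorm (⇑(T n φ)) q ν ≤ K) (N : ℕ) :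
    eLpNorm (⇑(cesaro ν T N φ)) q ν ≤ K := by
  rcases Nat.eq_zero_or_pos N with h0 | hN
  · subst h0
    have h : cesaro ν T 0 φ = 0 := by simp [cesaro]
    rw [h, eLpNorm_congr_ae (Lp.coeFn_zero ℝ 1 ν), eLpNorm_zero]
    exact zero_le
  · have heq : cesaro ν T N φ = (N:ℝ)⁻¹ • (∑ n ∈ Finset.range N, T n φ) := by
      simp [cesaro, LinearMap.sum_apply]
    rw [heq]
    rw [eLpNorm_congr_ae (Lp.coeFn_smul ((N:ℝ)⁻¹) (∑ n ∈ Finset.range N, T n φ))]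
    rw [eLpNorm_const_smul ((N:ℝ)⁻¹) (⇑(∑ n ∈ Finset.range N, T n φ)) q ν]
    rw [eLpNorm_congr_ae (coeFn_finset_sum (Finset.range N) (fun n => T n φ))]
    have hsum : eLpNorm (fun x => ∑ n ∈ Finset.range N, (T n φ) x) q ν
        ≤ (N : ℝ≥0∞) * K := by
      refine le_trans (b := ∑ n ∈ Finset.range N, eLpNorm (⇑(T n φ)) q ν) ?_ ?_
      · have hsum0 := eLpNorm_sum_le (μ := ν) (p := q) (f := fun n => (⇑(T n φ) : X → ℝ))
          (s := Finset.range N) (fun n _ => Lp.aestronglyMeasurable (T n φ)) hq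
        have hfn : (∑ n ∈ Finset.range N, (⇑(T n φ) : X → ℝ))
            = fun x => ∑ n ∈ Finset.range N, (T n φ) x := by
          funext x; exact Finset.sum_apply _ _ _
        rw [hfn] at hsum0
        exact hsum0
      · calc ∑ n ∈ Finset.range N, eLpNorm (⇑(T n φ)) q ν
            ≤ ∑ _n ∈ Finset.range N, K := Finset.sum_le_sum (fun n _ => hT n)
          _ = (N : ℝ≥0∞) * K := by simp [Finset.sum_const, nsmul_eq_mul]
    have hninv : (‖(N:ℝ)⁻¹‖₊ : ℝ≥0∞) = ((N : ℝ≥0∞))⁻¹ := by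
      rw [← enorm_eq_nnnorm, Real.enorm_eq_ofReal (inv_nonneg.2 (Nat.cast_nonneg N)), ENNReal.ofReal_inv_of_pos
        (by exact_mod_cast hN), ENNReal.ofReal_natCast]
    calc (‖(N:ℝ)⁻¹‖₊ : ℝ≥0∞) * eLpNorm (fun x => ∑ n ∈ Finset.range N, (T n φ) x) q ν
        ≤ ((N : ℝ≥0∞))⁻¹ * ((N : ℝ≥0∞) * K) := by rw [hninv]; exact mul_le_mul_right hsum _
      _ = K := by
          rw [← mul_assoc, ENNReal.inv_mul_cancel (by exact_mod_cast hN.ne') (by simp), one_mul]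

end Aux2

section Aux3
open Paper MeasureTheory Filter ENNReal
variable {X : Type*} [MeasurableSpace X] {ν : MeasureTheory.Measure X} [IsProbabilityMeasure ν]

lemma Paper.InBPlus.ae_tendsto_apply {A : Lp ℝ 1 ν →ₗ[ℝ] Lp ℝ 1 ν} {lamA : ℝ}
    (hA : InBPlus ν A lamA) (C : ℕ → Lp ℝ 1 ν) (g : X → ℝ) (hg : MemLp g 1 ν)
    {K : ℝ≥0∞} (hKne : K ≠ ∞)
    (hCK : ∀ N, eLpNorm (⇑(C N)) ∞ ν ≤ K)
    (hL1 : Tendsto (fun N => eLpNorm (fun x => (C N) x - g x) 1 ν) atTop (nhds 0))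
    (hae : ∀ᵐ x ∂ν, ∃ L : ℝ, Tendsto (fun N => (C N) x) atTop (nhds L)) :
    ∀ᵐ x ∂ν, Tendsto (fun N => (A (C N)) x) atTop (nhds ((A (hg.toLp g)) x)) := by
  classical
  set G : Lp ℝ 1 ν := hg.toLp g with hG
  -- Step 1: a.e. pointwise convergence of C N to g
  have htim : TendstoInMeasure ν (fun N => ⇑(C N)) atTop g := by
    refine tendstoInMeasure_of_tendsto_eLpNorm (p := 1) one_ne_zero
      (fun N => Lp.aestronglyMeasurable (C N)) hg.aestronglyMeasurable ?_
    simpa only [Pi.sub_def] using hL1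
  obtain ⟨ns, hns, hnsae⟩ := htim.exists_seq_tendsto_ae
  have hCg : ∀ᵐ x ∂ν, Tendsto (fun N => (C N) x) atTop (nhds (g x)) := by
    filter_upwards [hae, hnsae] with x hx hsub
    obtain ⟨L, hL⟩ := hx
    have h1 : Tendsto (fun i => (C (ns i)) x) atTop (nhds L) :=
      hL.comp hns.tendsto_atTop
    have : g x = L := tendsto_nhds_unique hsub h1
    rwa [this]
  -- Step 2: uniform bounds
  have hbd : ∀ᵐ x ∂ν, ∀ N, (‖(C N) x‖₊ : ℝ≥0∞) ≤ K := by
    rw [ae_all_iff]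
    intro N
    filter_upwards [ae_le_eLpNormEssSup (f := ⇑(C N)) (μ := ν)] with x hx
    exact hx.trans (by rw [← eLpNorm_exponent_top]; exact hCK N)
  have hgK : ∀ᵐ x ∂ν, (‖g x‖₊ : ℝ≥0∞) ≤ K := by
    filter_upwards [hCg, hbd] with x hx hb
    have h1 : Tendsto (fun N => (‖(C N) x‖₊ : ℝ≥0∞)) atTop (nhds (‖g x‖₊ : ℝ≥0∞)) :=
      ENNReal.tendsto_coe.2 ((continuous_nnnorm.tendsto _).comp hx)
    exact le_of_tendsto h1 (Eventually.of_forall hb)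
  -- Step 3: the dominating functions
  set W : ℕ → X → ℝ≥0∞ := fun M x => ⨆ N, (‖(C (M + N)) x - g x‖₊ : ℝ≥0∞) with hW
  set s : ℕ → X → ℝ := fun M x => (min (W M x) (2 * K + 1)).toReal with hs
  have h2K1 : (2 * K + 1) ≠ ∞ := by
    simp [ENNReal.add_ne_top, ENNReal.mul_ne_top, hKne]
  have hminne : ∀ M x, min (W M x) (2 * K + 1) ≠ ∞ :=
    fun M x => ne_top_of_le_ne_top h2K1 (min_le_right _ _)
  have hWmeas : ∀ M, AEMeasurable (W M) ν := by
    intro M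
    refine AEMeasurable.iSup (fun N => ?_)
    exact ((Lp.aestronglyMeasurable (C (M + N))).aemeasurable.sub
      hg.aestronglyMeasurable.aemeasurable).enorm
  have hsmeas : ∀ M, AEStronglyMeasurable (s M) ν := by
    intro M
    refine (ENNReal.measurable_toReal.comp_aemeasurable ?_).aestronglyMeasurable
    exact (hWmeas M).min aemeasurable_const
  have hsnonneg : ∀ M x, 0 ≤ s M x := fun M x => ENNReal.toReal_nonneg
  have hsbound : ∀ M x, s M x ≤ (2 * K + 1).toReal :=
    fun M x => ENNReal.toReal_mono h2K1 (min_le_right _ _)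
  have hsmem : ∀ M, MemLp (s M) 1 ν := by
    intro M
    refine MemLp.of_bound (hsmeas M) ((2 * K + 1).toReal) ?_
    refine Eventually.of_forall (fun x => ?_)
    rw [Real.norm_eq_abs, abs_of_nonneg (hsnonneg M x)]
    exact hsbound M x
  set S : ℕ → Lp ℝ 1 ν := fun M => (hsmem M).toLp (s M) with hS
  -- Step 4: domination a.e.
  have hdom : ∀ᵐ x ∂ν, ∀ M N, |(C (M + N)) x - g x| ≤ s M x := by
    filter_upwards [hbd, hgK] with x hb hgx
    intro M N
    have h1 : (‖(C (M + N)) x - g x‖₊ : ℝ≥0∞) ≤ min (W M x) (2 * K + 1) := by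
      refine le_min (le_iSup (fun N => (‖(C (M + N)) x - g x‖₊ : ℝ≥0∞)) N) ?_
      calc (‖(C (M + N)) x - g x‖₊ : ℝ≥0∞)
          ≤ (‖(C (M + N)) x‖₊ : ℝ≥0∞) + (‖g x‖₊ : ℝ≥0∞) := by
            exact_mod_cast nnnorm_sub_le _ _
        _ ≤ K + K := add_le_add (hb _) hgx
        _ ≤ 2 * K + 1 := by rw [two_mul]; exact le_add_right le_rfl
    have h2 : |(C (M + N)) x - g x| = ((‖(C (M + N)) x - g x‖₊ : ℝ≥0∞)).toReal := by
      simp [Real.norm_eq_abs]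
    rw [h2, hs]
    exact ENNReal.toReal_mono (hminne M x) h1
  -- Step 5: key positivity estimate
  have hposA : ∀ (u v : Lp ℝ 1 ν), u ≤ v → A u ≤ A v := by
    intro u v huv
    have h0 : (0 : Lp ℝ 1 ν) ≤ v - u := by
      rwa [le_sub_iff_add_le, zero_add]
    have := hA.2.1 _ h0
    rw [map_sub] at this
    rwa [le_sub_iff_add_le, zero_add] at this
  have hkey : ∀ᵐ x ∂ν, ∀ M N, |(A (C (M + N))) x - (A G) x| ≤ (A (S M)) x := by
    rw [ae_all_iff]
    intro M
    rw [ae_all_iff]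
    intro N
    -- Lp-level inequalities
    have hcoe : ⇑(C (M + N) - G) =ᵐ[ν] fun x => (C (M + N)) x - g x := by
      filter_upwards [Lp.coeFn_sub (C (M + N)) G, hg.coeFn_toLp] with x h1 h2
      rw [h1, Pi.sub_apply, h2]
    have hle1 : C (M + N) - G ≤ S M := by
      rw [← Lp.coeFn_le]
      filter_upwards [hcoe, (hsmem M).coeFn_toLp, hdom] with x h1 h2 h3
      rw [h1, h2]
      exact le_trans (le_abs_self _) (h3 M N)
    have hle2 : -(S M) ≤ C (M + N) - G := by
      rw [← Lp.coeFn_le]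
      filter_upwards [hcoe, (hsmem M).coeFn_toLp, hdom, Lp.coeFn_neg (S M)] with x h1 h2 h3 h4
      rw [h1, h4, Pi.neg_apply, h2]
      exact neg_le_of_abs_le (h3 M N)
    have hA1 : A (C (M + N)) - A G ≤ A (S M) := by
      have := hposA _ _ hle1
      rwa [map_sub] at this
    have hA2 : -(A (S M)) ≤ A (C (M + N)) - A G := by
      have := hposA _ _ hle2
      rwa [map_sub, map_neg] at this
    rw [← Lp.coeFn_le] at hA1 hA2
    filter_upwards [hA1, hA2, Lp.coeFn_sub (A (C (M + N))) (A G),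
      Lp.coeFn_neg (A (S M))] with x h1 h2 h3 h4
    rw [h3, Pi.sub_apply] at h1 h2
    rw [h4, Pi.neg_apply] at h2
    exact abs_le.2 ⟨h2, h1⟩
  -- Step 6: monotonicity of A (S M)
  have hSanti : ∀ M, S (M + 1) ≤ S M := by
    intro M
    rw [← Lp.coeFn_le]
    filter_upwards [(hsmem (M + 1)).coeFn_toLp, (hsmem M).coeFn_toLp] with x h1 h2
    rw [h1, h2]
    refine ENNReal.toReal_mono (hminne M x) (min_le_min ?_ le_rfl)
    refine iSup_le (fun N => ?_)
    have : M + 1 + N = M + (N + 1) := by omega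
    rw [this]
    exact le_iSup (fun N => (‖(C (M + N)) x - g x‖₊ : ℝ≥0∞)) (N + 1)
  have hSnonneg : ∀ M, (0 : Lp ℝ 1 ν) ≤ S M := by
    intro M
    rw [← Lp.coeFn_nonneg]
    filter_upwards [(hsmem M).coeFn_toLp] with x h1
    rw [h1]
    exact hsnonneg M x
  have htanti : ∀ᵐ x ∂ν, ∀ M, (A (S (M + 1))) x ≤ (A (S M)) x := by
    rw [ae_all_iff]
    intro M
    have := hposA _ _ (hSanti M)
    rw [← Lp.coeFn_le] at this
    exact this
  have htnonneg : ∀ᵐ x ∂ν, ∀ M, 0 ≤ (A (S M)) x := by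
    rw [ae_all_iff]
    intro M
    have := hA.2.1 _ (hSnonneg M)
    rw [← Lp.coeFn_nonneg] at this
    exact this
  -- Step 7: integral of the dominating sequence tends to 0
  have hWto0 : ∀ᵐ x ∂ν, Tendsto (fun M => min (W M x) (2 * K + 1)) atTop (nhds 0) := by
    filter_upwards [hCg] with x hx
    have ha : Tendsto (fun N => (‖(C N) x - g x‖₊ : ℝ≥0∞)) atTop (nhds 0) := by
      have h1 : Tendsto (fun N => (C N) x - g x) atTop (nhds (g x - g x)) :=
        hx.sub tendsto_const_nhds
      rw [sub_self] at h1
      simpa using ENNReal.tendsto_coe.2 h1.nnnorm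
    have hWx : Tendsto (fun M => W M x) atTop (nhds 0) := by
      rw [ENNReal.tendsto_nhds_zero]
      rw [ENNReal.tendsto_nhds_zero] at ha
      intro ε hε
      obtain ⟨M₀, hM₀⟩ := (ha ε hε).exists_forall_of_atTop
      filter_upwards [eventually_ge_atTop M₀] with M hM
      exact iSup_le fun N => hM₀ _ (le_trans hM (Nat.le_add_right M N))
    exact tendsto_of_tendsto_of_tendsto_of_le_of_le tendsto_const_nhds hWx
      (fun M => zero_le) (fun M => min_le_left _ _)
  have hlint : Tendsto (fun M => ∫⁻ x, min (W M x) (2 * K + 1) ∂ν) atTop (nhds 0) := by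
    have := tendsto_lintegral_of_dominated_convergence' (μ := ν)
      (F := fun M x => min (W M x) (2 * K + 1)) (f := fun _ => 0)
      (fun _ => 2 * K + 1) (fun M => (hWmeas M).min aemeasurable_const)
      (fun M => Eventually.of_forall fun x => min_le_right _ _)
      (by simp [lintegral_const, h2K1]) hWto0
    simpa using this
  have hsnorm : ∀ M, eLpNorm (s M) 1 ν = ∫⁻ x, min (W M x) (2 * K + 1) ∂ν := by
    intro M
    rw [eLpNorm_one_eq_lintegral_enorm]
    refine lintegral_congr fun x => ?_
    rw [Real.enorm_eq_ofReal (hsnonneg M x), hs, ENNReal.ofReal_toReal (hminne M x)]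
  have ht0 : Tendsto (fun M => eLpNorm (⇑(A (S M))) 1 ν) atTop (nhds 0) := by
    have hb : ∀ M, eLpNorm (⇑(A (S M))) 1 ν
        ≤ ENNReal.ofReal lamA * ∫⁻ x, min (W M x) (2 * K + 1) ∂ν := by
      intro M
      have h1 := (hA.2.2 1 le_rfl (S M) (Lp.memLp (S M))).2
      have h2 : eLpNorm (⇑(S M)) 1 ν = ∫⁻ x, min (W M x) (2 * K + 1) ∂ν := by
        rw [eLpNorm_congr_ae ((hsmem M).coeFn_toLp), hsnorm M]
      rwa [h2] at h1
    have hc : Tendsto (fun M => ENNReal.ofReal lamA * ∫⁻ x, min (W M x) (2 * K + 1) ∂ν)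
        atTop (nhds 0) := by
      have := ENNReal.Tendsto.const_mul (a := ENNReal.ofReal lamA) hlint
        (Or.inr ENNReal.ofReal_ne_top)
      simpa using this
    exact tendsto_of_tendsto_of_tendsto_of_le_of_le tendsto_const_nhds hc
      (fun M => zero_le) hb
  -- Step 8: the infimum of A (S M) vanishes a.e.
  set H : X → ℝ≥0∞ := fun x => ⨅ M, ENNReal.ofReal ((A (S M)) x) with hHdef
  have hHmeas : AEMeasurable H ν := by
    refine AEMeasurable.iInf (fun M => ?_)
    exact ENNReal.measurable_ofReal.comp_aemeasurable
      (Lp.aestronglyMeasurable (A (S M))).aemeasurable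
  have hHle : ∀ M, ∫⁻ x, H x ∂ν ≤ eLpNorm (⇑(A (S M))) 1 ν := by
    intro M
    rw [eLpNorm_one_eq_lintegral_enorm]
    refine lintegral_mono fun x => ?_
    exact le_trans (iInf_le _ M) (Real.ofReal_le_enorm _)
  have hH0 : ∫⁻ x, H x ∂ν = 0 :=
    le_antisymm (ge_of_tendsto' ht0 hHle) (zero_le)
  have Hae : ∀ᵐ x ∂ν, H x = 0 := (lintegral_eq_zero_iff' hHmeas).1 hH0
  -- Step 9: conclusion
  filter_upwards [hkey, htanti, htnonneg, Hae] with x hk hanti hnn hH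
  have hmono : Antitone fun M => (A (S M)) x := antitone_nat_of_succ_le hanti
  rw [Metric.tendsto_atTop]
  intro ε hε
  have hlt : (⨅ M, ENNReal.ofReal ((A (S M)) x)) < ENNReal.ofReal ε := by
    rw [show (⨅ M, ENNReal.ofReal ((A (S M)) x)) = H x from rfl, hH]
    exact ENNReal.ofReal_pos.2 hε
  obtain ⟨M, hM⟩ := iInf_lt_iff.1 hlt
  have htM : (A (S M)) x < ε := (ENNReal.ofReal_lt_ofReal_iff hε).1 hM
  refine ⟨M, fun N hN => ?_⟩
  rw [Real.dist_eq]
  have h := hk M (N - M)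
  rw [Nat.add_sub_cancel' hN] at h
  exact lt_of_le_of_lt h htM

end Aux3

open Paper MeasureTheory Filter in
/-- **Lemma (multiplication by a fixed `B⁺` operator preserves pre-convergence).**
If `{Fₙ}` is a pre-convergent sequence of operators of class `B⁺` and `A ∈ B⁺`,
then the sequences `{A Fₙ}` and `{Fₙ A}` (with `λ(A Fₙ) = λ(Fₙ A) = λ(A)·λ(Fₙ)`)
are pre-convergent sequences of operators of class `B⁺`. -/
theorem preconvergent_mul_const
    {X : Type*} [MeasurableSpace X] (ν : MeasureTheory.Measure X) [IsProbabilityMeasure ν]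
    (F : ℕ → (Lp ℝ 1 ν →ₗ[ℝ] Lp ℝ 1 ν)) (lamF : ℕ → ℝ)
    (hF : ∀ n, InBPlus ν (F n) (lamF n))
    (hFpre : PreConvergent ν F lamF)
    (A : Lp ℝ 1 ν →ₗ[ℝ] Lp ℝ 1 ν) (lamA : ℝ) (hA : InBPlus ν A lamA) :
    ((∀ n, InBPlus ν (A ∘ₗ F n) (lamA * lamF n)) ∧
      PreConvergent ν (fun n => A ∘ₗ F n) (fun n => lamA * lamF n)) ∧
    ((∀ n, InBPlus ν (F n ∘ₗ A) (lamF n * lamA)) ∧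
      PreConvergent ν (fun n => F n ∘ₗ A) (fun n => lamF n * lamA)) := by
  classical
  have hTmem : ∀ (p : ℝ≥0∞), 1 ≤ p → ∀ n (f : Lp ℝ 1 ν), MemLp (⇑f) p ν →
      MemLp (⇑(((lamF n)⁻¹ • F n) f)) p ν := by
    intro p hp n f hf
    rw [LinearMap.smul_apply]
    exact ((hF n).norm_one_bound p hp f hf).1
  have hregL : Paper.IsRegular (fun n => lamA * lamF n) := by
    rcases eq_or_lt_of_le hA.lam_nonneg with h0 | hpos
    · exact ⟨1, one_pos, fun r _ => Or.inl (Eventually.of_forall fun k => by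
        show lamA * lamF (1 * k + r) = 0
        rw [← h0, zero_mul])⟩
    · exact hFpre.1.const_mul hpos
  -- Part 1: A ∘ F n
  have left : (∀ n, InBPlus ν (A ∘ₗ F n) (lamA * lamF n)) ∧
      PreConvergent ν (fun n => A ∘ₗ F n) (fun n => lamA * lamF n) := by
    refine ⟨fun n => hA.comp (hF n), hregL, ?_, ?_⟩
    · -- Lp convergence
      intro p hp hptop φ hφ
      obtain ⟨g, hg, ht⟩ := hFpre.2.1 p hp hptop φ hφ
      have hg1 : MemLp g 1 ν := hg.mono_exponent hp
      set G : Lp ℝ 1 ν := hg1.toLp g with hGdef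
      have hGp : MemLp (⇑G) p ν := hg.ae_eq hg1.coeFn_toLp.symm
      refine ⟨⇑(lamA⁻¹ • A G), (hA.norm_one_bound p hp G hGp).1, ?_⟩
      have hCmem : ∀ N, MemLp (⇑(cesaro ν (fun n => (lamF n)⁻¹ • F n) N φ)) p ν :=
        fun N => memℒp_cesaro_coe _ (hTmem p hp) N φ hφ
      have key : ∀ N,
          eLpNorm (fun x => (cesaro ν (fun n => (lamA * lamF n)⁻¹ • (A ∘ₗ F n)) N φ) x
            - (lamA⁻¹ • A G) x) p ν
          ≤ eLpNorm (fun x => (cesaro ν (fun n => (lamF n)⁻¹ • F n) N φ) x - g x) p ν := by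
        intro N
        rw [cesaro_comp_left]
        set D := cesaro ν (fun n => (lamF n)⁻¹ • F n) N φ with hD
        have he1 : (fun x => (lamA⁻¹ • A D) x - (lamA⁻¹ • A G) x)
            =ᵐ[ν] ⇑(lamA⁻¹ • A (D - G)) := by
          have heq : lamA⁻¹ • A (D - G) = lamA⁻¹ • A D - lamA⁻¹ • A G := by
            rw [map_sub, smul_sub]
          rw [heq]
          filter_upwards [Lp.coeFn_sub (lamA⁻¹ • A D) (lamA⁻¹ • A G)] with x h
          rw [h, Pi.sub_apply]
        rw [eLpNorm_congr_ae he1]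
        have hDg : (fun x => D x - g x) =ᵐ[ν] ⇑(D - G) := by
          filter_upwards [Lp.coeFn_sub D G, hg1.coeFn_toLp] with x h1 h2
          rw [h1, Pi.sub_apply, h2]
        have hDG : MemLp (⇑(D - G)) p ν := ((hCmem N).sub hg).ae_eq hDg
        refine ((hA.norm_one_bound p hp (D - G) hDG).2).trans (le_of_eq ?_)
        exact eLpNorm_congr_ae hDg.symm
      exact tendsto_of_tendsto_of_tendsto_of_le_of_le tendsto_const_nhds ht
        (fun N => zero_le) key
    · -- a.e. convergence
      intro φ hφ
      set K : ℝ≥0∞ := eLpNorm (⇑φ) ∞ ν with hK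
      have hKne : K ≠ ∞ := hφ.2.ne
      have hTb : ∀ n, eLpNorm (⇑(((lamF n)⁻¹ • F n) φ)) ∞ ν ≤ K := by
        intro n
        rw [LinearMap.smul_apply]
        exact ((hF n).norm_one_bound ∞ le_top φ hφ).2
      have hCK : ∀ N, eLpNorm (⇑(cesaro ν (fun n => (lamF n)⁻¹ • F n) N φ)) ∞ ν ≤ K :=
        eLpNorm_cesaro_le le_top _ φ hTb
      obtain ⟨g, hg, ht1⟩ := hFpre.2.1 1 le_rfl ENNReal.one_ne_top φ (Lp.memLp φ)
      have hae := hFpre.2.2 φ hφ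
      have hmain := hA.ae_tendsto_apply (fun N => cesaro ν (fun n => (lamF n)⁻¹ • F n) N φ)
        g hg hKne hCK ht1 hae
      have hsm : ∀ᵐ x ∂ν, ∀ N,
          (lamA⁻¹ • A (cesaro ν (fun n => (lamF n)⁻¹ • F n) N φ)) x
            = lamA⁻¹ * (A (cesaro ν (fun n => (lamF n)⁻¹ • F n) N φ)) x := by
        rw [ae_all_iff]
        intro N
        filter_upwards [Lp.coeFn_smul lamA⁻¹
          (A (cesaro ν (fun n => (lamF n)⁻¹ • F n) N φ))] with x h
        rw [h, Pi.smul_apply, smul_eq_mul]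
      filter_upwards [hmain, hsm] with x hx hs
      refine ⟨lamA⁻¹ * (A (hg.toLp g)) x, ?_⟩
      have h2 : Tendsto (fun N =>
          lamA⁻¹ * (A (cesaro ν (fun n => (lamF n)⁻¹ • F n) N φ)) x) atTop
          (nhds (lamA⁻¹ * (A (hg.toLp g)) x)) := hx.const_mul lamA⁻¹
      refine h2.congr fun N => ?_
      rw [← hs N, ← cesaro_comp_left A F lamF lamA N φ]
  -- Part 2: F n ∘ A
  have hregR : Paper.IsRegular (fun n => lamF n * lamA) := by
    have heq : (fun n => lamF n * lamA) = fun n => lamA * lamF n :=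
      funext fun n => mul_comm _ _
    rw [heq]
    exact hregL
  refine ⟨left, fun n => (hF n).comp hA, hregR, ?_, ?_⟩
  · intro p hp hptop φ hφ
    have hψ : MemLp (⇑(lamA⁻¹ • A φ)) p ν := (hA.norm_one_bound p hp φ hφ).1
    obtain ⟨g, hg, ht⟩ := hFpre.2.1 p hp hptop (lamA⁻¹ • A φ) hψ
    refine ⟨g, hg, ?_⟩
    have heq : ∀ N, cesaro ν (fun n => (lamF n * lamA)⁻¹ • (F n ∘ₗ A)) N φ
        = cesaro ν (fun n => (lamF n)⁻¹ • F n) N (lamA⁻¹ • A φ) :=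
      fun N => cesaro_comp_right A F lamF lamA N φ
    simpa only [heq] using ht
  · intro φ hφ
    have hψ : MemLp (⇑(lamA⁻¹ • A φ)) ∞ ν := (hA.norm_one_bound ∞ le_top φ hφ).1
    filter_upwards [hFpre.2.2 (lamA⁻¹ • A φ) hψ] with x hx
    obtain ⟨L, hL⟩ := hx
    refine ⟨L, hL.congr fun N => ?_⟩
    rw [← cesaro_comp_right A F lamF lamA N φ]
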